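/- The isometric path cover number of a tree with ℓ leaves is ⌈ℓ/2⌉. -/

import Mathlib

open SimpleGraph

variable {V : Type*}

/-- A walk is an induced path: it is a path and every adjacency between its
vertices is an edge of the walk. -/
def IsInducedWalk (G : SimpleGraph V) {u v : V} (p : G.Walk u v) : Prop :=
  p.IsPath ∧ ∀ a ∈ p.support, ∀ b ∈ p.support, G.Adj a b → s(a, b) ∈ p.edges

/-- A walk is an isometric (shortest) path between its endpoints. -/
def IsIsometricWalk (G : SimpleGraph V) {u v : V} (p : G.Walk u v) : Prop :=
  p.IsPath ∧ p.length = G.dist u v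

/-- A family of walks is a path cover: each walk is a path and every
vertex lies on at least one of the walks. -/
def IsPathCover (G : SimpleGraph V) {n : ℕ}
    (P : Fin n → Σ u : V, Σ v : V, G.Walk u v) : Prop :=
  (∀ i, (P i).2.2.IsPath) ∧ ∀ x : V, ∃ i, x ∈ (P i).2.2.support

/-- A family of walks is a path partition: each walk is a path and every
vertex lies on exactly one of the walks. -/
def IsPathPartition (G : SimpleGraph V) {n : ℕ}
    (P : Fin n → Σ u : V, Σ v : V, G.Walk u v) : Prop :=
  (∀ i, (P i).2.2.IsPath) ∧ ∀ x : V, ∃! i, x ∈ (P i).2.2.support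

/-- π_c : the path cover number. -/
noncomputable def pathCoverNum (G : SimpleGraph V) : ℕ :=
  sInf {n | ∃ P : Fin n → Σ u : V, Σ v : V, G.Walk u v, IsPathCover G P}

/-- ρ_c : the induced path cover number. -/
noncomputable def inducedPathCoverNum (G : SimpleGraph V) : ℕ :=
  sInf {n | ∃ P : Fin n → Σ u : V, Σ v : V, G.Walk u v,
    IsPathCover G P ∧ ∀ i, IsInducedWalk G (P i).2.2}

/-- ip_c : the isometric path cover number. -/
noncomputable def isometricPathCoverNum (G : SimpleGraph V) : ℕ :=
  sInf {n | ∃ P : Fin n → Σ u : V, Σ v : V, G.Walk u v,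
    IsPathCover G P ∧ ∀ i, IsIsometricWalk G (P i).2.2}

/-- π_p : the path partition number. -/
noncomputable def pathPartitionNum (G : SimpleGraph V) : ℕ :=
  sInf {n | ∃ P : Fin n → Σ u : V, Σ v : V, G.Walk u v, IsPathPartition G P}

/-- ρ_p : the induced path partition number. -/
noncomputable def inducedPathPartitionNum (G : SimpleGraph V) : ℕ :=
  sInf {n | ∃ P : Fin n → Σ u : V, Σ v : V, G.Walk u v,
    IsPathPartition G P ∧ ∀ i, IsInducedWalk G (P i).2.2}

/-- ip_p : the isometric path partition number. -/
noncomputable def isometricPathPartitionNum (G : SimpleGraph V) : ℕ :=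
  sInf {n | ∃ P : Fin n → Σ u : V, Σ v : V, G.Walk u v,
    IsPathPartition G P ∧ ∀ i, IsIsometricWalk G (P i).2.2}


set_option linter.unusedSectionVars false
set_option maxHeartbeats 1000000

namespace TC
variable {V : Type*} [Fintype V] [DecidableEq V] {G : SimpleGraph V} [DecidableRel G.Adj]

noncomputable def pat (ht : G.IsTree) (u v : V) : G.Walk u v :=
  (ht.existsUnique_path u v).choose

lemma pat_isPath (ht : G.IsTree) (u v : V) : (pat ht u v).IsPath :=
  (ht.existsUnique_path u v).choose_spec.1

lemma pat_unique (ht : G.IsTree) {u v : V} {p : G.Walk u v} (hp : p.IsPath) :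
    p = pat ht u v :=
  (ht.existsUnique_path u v).choose_spec.2 p hp

lemma pat_length (ht : G.IsTree) (u v : V) : (pat ht u v).length = G.dist u v := by
  obtain ⟨q, hq⟩ := ht.isConnected.exists_walk_length_eq_dist u v
  have h1 : G.dist u v ≤ (pat ht u v).length := dist_le _
  have h2 : (pat ht u v).length ≤ q.bypass.length := by
    rw [← pat_unique ht q.bypass_isPath]
  have := q.length_bypass_le
  omega

lemma pat_self_support (ht : G.IsTree) (r : V) : (pat ht r r).support = [r] := by
  have : pat ht r r = Walk.nil := by
    rw [← pat_unique ht (Walk.IsPath.nil)]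
  rw [this]; rfl

lemma mem_pat_symm (ht : G.IsTree) {x y z : V} (h : z ∈ (pat ht x y).support) :
    z ∈ (pat ht y x).support := by
  have : (pat ht x y).reverse = pat ht y x := pat_unique ht (pat_isPath ht x y).reverse
  rw [← this, Walk.support_reverse, List.mem_reverse]
  exact h

lemma mem_support_iff_prefix (ht : G.IsTree) (r v z : V) :
    v ∈ (pat ht r z).support ↔ (pat ht r v).support <+: (pat ht r z).support := by
  constructor
  · intro h
    have ht1 : ((pat ht r z).takeUntil v h) = pat ht r v :=
      pat_unique ht ((pat_isPath ht r z).takeUntil h)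
    have h2 := Walk.support_append ((pat ht r z).takeUntil v h) ((pat ht r z).dropUntil v h)
    rw [Walk.take_spec] at h2
    rw [← ht1]
    exact ⟨_, h2.symm⟩
  · intro h
    exact h.subset ((pat ht r v).end_mem_support)

lemma exists_leaf_below (ht : G.IsTree) (hcard : 2 ≤ Fintype.card V) (r v : V) :
    ∃ z, G.degree z = 1 ∧ v ∈ (pat ht r z).support := by
  classical
  set S : Finset V := Finset.univ.filter (fun z => v ∈ (pat ht r z).support) with hS
  have hvS : v ∈ S := by
    simp [hS, Walk.end_mem_support]
  obtain ⟨z, hzS, hzmax⟩ := Finset.exists_max_image S (fun z => (pat ht r z).length) ⟨v, hvS⟩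
  have hzmem : v ∈ (pat ht r z).support := by simpa [hS] using hzS
  -- z ≠ r
  have hwit : ∃ w ∈ S, 1 ≤ (pat ht r w).length := by
    by_cases hv : v = r
    · obtain ⟨w, hw⟩ := Fintype.exists_ne_of_one_lt_card (by omega) r
      refine ⟨w, ?_, ?_⟩
      · simp [hS, hv, Walk.start_mem_support]
      · by_contra h
        exact hw (Walk.eq_of_length_eq_zero (p := pat ht r w) (by omega)).symm
    · refine ⟨v, hvS, ?_⟩
      by_contra h
      exact hv (Walk.eq_of_length_eq_zero (p := pat ht r v) (by omega)).symm
  have hzlen : 1 ≤ (pat ht r z).length := by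
    obtain ⟨w, hw, hw1⟩ := hwit
    exact le_trans hw1 (hzmax w hw)
  have hzr : z ≠ r := by
    intro heq
    subst heq
    have : (pat ht z z).support.length = 1 := by rw [pat_self_support]; rfl
    rw [Walk.length_support] at this
    omega
  refine ⟨z, ?_, hzmem⟩
  by_contra hdeg
  -- decompose reverse walk
  cases hr2 : (pat ht r z).reverse with
  | nil => exact hzr rfl
  | cons hzw q2 =>
    rename_i w
    have hwnb : w ∈ G.neighborFinset z := by simpa using hzw
    have hone : 1 ≤ G.degree z := by
      rw [← card_neighborFinset_eq_degree]
      exact Finset.card_pos.mpr ⟨w, hwnb⟩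
    obtain ⟨y, hynb, hyw⟩ : ∃ y ∈ G.neighborFinset z, y ≠ w := by
      by_contra h
      push_neg at h
      have : G.neighborFinset z = {w} := by
        apply Finset.eq_singleton_iff_unique_mem.mpr ⟨hwnb, h⟩
      rw [← card_neighborFinset_eq_degree, this] at hdeg
      simp at hdeg
    have hzy : G.Adj z y := by simpa using hynb
    have hrev_path : (pat ht r z).reverse.IsPath := (pat_isPath ht r z).reverse
    have hrevpat : (pat ht r z).reverse = pat ht z r := pat_unique ht hrev_path
    -- y ∉ support of pat r z
    have hynot : y ∉ (pat ht r z).support := by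
      intro hy
      have hy' : y ∈ (pat ht z r).support := mem_pat_symm ht hy
      have hpre := (mem_support_iff_prefix ht z y r).mp hy'
      have hsingle : (Walk.cons hzy Walk.nil : G.Walk z y) = pat ht z y := by
        apply pat_unique ht
        rw [Walk.cons_isPath_iff]
        exact ⟨Walk.IsPath.nil, by simp [hzy.ne]⟩
      have hsup1 : (pat ht z y).support = [z, y] := by
        rw [← hsingle]; rfl
      have hsup2 : (pat ht z r).support = z :: q2.support := by
        rw [← hrevpat, hr2, Walk.support_cons]
      rw [hsup1, hsup2, Walk.support_eq_cons q2] at hpre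
      obtain ⟨t, htt⟩ := hpre
      simp at htt
      rw [Walk.support_eq_cons q2] at htt
      exact hyw (List.cons.inj htt).1
    -- extend
    set q' : G.Walk r y := (Walk.cons hzy.symm (pat ht r z).reverse).reverse with hq'
    have hq'path : q'.IsPath := by
      apply Walk.IsPath.reverse
      rw [Walk.cons_isPath_iff]
      refine ⟨hrev_path, ?_⟩
      rw [Walk.support_reverse, List.mem_reverse]
      exact hynot
    have hq'eq : q' = pat ht r y := pat_unique ht hq'path
    have hq'len : q'.length = (pat ht r z).length + 1 := by
      rw [hq', Walk.length_reverse, Walk.length_cons, Walk.length_reverse]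
    have hvq' : v ∈ q'.support := by
      rw [hq']
      simp only [Walk.support_reverse, List.mem_reverse, Walk.support_cons, List.mem_cons]
      right
      exact hzmem
    have hyS : y ∈ S := by
      simp only [hS, Finset.mem_filter, Finset.mem_univ, true_and]
      rw [← hq'eq]; exact hvq'
    have := hzmax y hyS
    rw [← hq'eq, hq'len] at this
    omega

variable {V : Type*} [Fintype V] [DecidableEq V] {G : SimpleGraph V} [DecidableRel G.Adj]

lemma lex3 {α : Type*} [LinearOrder α] :
    ∀ (P a b c : List α), P <+: a → P <+: b → ¬ (c < a) → ¬ (b < c) → P <+: c := by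
  intro P
  induction P with
  | nil => intro a b c _ _ _ _; exact List.nil_prefix
  | cons p P' ih =>
    intro a b c h1 h2 hca hbc
    obtain ⟨ta, rfl⟩ := h1
    obtain ⟨tb, rfl⟩ := h2
    cases c with
    | nil =>
      exact absurd (List.nil_lt_cons p _) hca
    | cons q c' =>
      rcases lt_trichotomy q p with h | h | h
      · exact absurd (List.Lex.rel h) hca
      · subst h
        have hca' : ¬ (c' < P' ++ ta) := fun hh => hca (List.Lex.cons hh)
        have hbc' : ¬ (P' ++ tb < c') := fun hh => hbc (List.Lex.cons hh)
        obtain ⟨t, htt⟩ := ih (P' ++ ta) (P' ++ tb) c'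
          (List.prefix_append _ _) (List.prefix_append _ _) hca' hbc'
        exact ⟨t, by rw [List.cons_append, htt]⟩
      · exact absurd (List.Lex.rel h) hbc


lemma adj_unique_of_degree_one {x : V} (hdeg : G.degree x = 1) :
    ∀ {a b : V}, G.Adj x a → G.Adj x b → a = b := by
  intro a b ha hb
  rw [← card_neighborFinset_eq_degree] at hdeg
  exact Finset.card_le_one.mp (le_of_eq hdeg) a (by simpa using ha) b (by simpa using hb)

lemma leaf_endpoint {x : V} (hdeg : G.degree x = 1) :
    ∀ {u v : V} (p : G.Walk u v), p.IsPath → x ∈ p.support → x = u ∨ x = v := by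
  intro u v p
  induction p with
  | nil => intro _ hx; left; simpa using hx
  | cons h q ih =>
    rename_i a b c
    intro hp hx
    rw [Walk.support_cons, List.mem_cons] at hx
    rcases hx with rfl | hx
    · left; rfl
    · rcases ih hp.of_cons hx with rfl | rfl
      · -- x is the start of q
        cases q with
        | nil => right; rfl
        | cons h2 q2 =>
          rename_i d
          exfalso
          have : a = d := adj_unique_of_degree_one hdeg h.symm h2
          rw [Walk.cons_isPath_iff] at hp
          exact hp.2 (by rw [this, Walk.support_cons]; right; exact q2.start_mem_support)
      · right; rfl

lemma straddle (L m i1 i2 : ℕ) (hL : 2 ≤ L) (hm : m = (L + 1) / 2) (h12 : i1 ≤ i2)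
    (h2 : i2 < L) (hne : ¬ (i1 = 0 ∧ i2 = L - 1)) :
    ∃ j, j < m ∧ ((i1 ≤ j ∧ j ≤ i2) ↔ ¬ (i1 ≤ (j + m) % L ∧ (j + m) % L ≤ i2)) := by
  have hmL : m < L := by omega
  have hmod : ∀ j, j + m ≤ L → (j + m) % L = if j + m = L then 0 else j + m := by
    intro j hj
    by_cases h : j + m = L
    · simp [h]
    · rw [Nat.mod_eq_of_lt (by omega)]
      simp [h]
  by_cases hc1 : i2 < m
  · refine ⟨i1, by omega, ?_⟩
    rw [hmod i1 (by omega)]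
    split_ifs with h <;> omega
  · by_cases hc2 : m ≤ i1
    · refine ⟨i1 - m, by omega, ?_⟩
      rw [hmod (i1 - m) (by omega)]
      split_ifs with h <;> omega
    · by_cases hc3 : i2 - i1 < m
      · refine ⟨i1, by omega, ?_⟩
        rw [hmod i1 (by omega)]
        split_ifs with h <;> omega
      · by_cases hc4 : 1 ≤ i1
        · refine ⟨0, by omega, ?_⟩
          rw [hmod 0 (by omega)]
          split_ifs with h <;> omega
        · refine ⟨i2 + 1 - m, by omega, ?_⟩
          rw [hmod (i2 + 1 - m) (by omega)]
          split_ifs with h <;> omega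


lemma crossing (ht : G.IsTree) {r v x y : V} (hx : v ∈ (pat ht r x).support)
    (hy : v ∉ (pat ht r y).support) : v ∈ (pat ht x y).support := by
  have hb : ((pat ht r y).append (pat ht y x)).bypass = pat ht r x :=
    pat_unique ht (Walk.bypass_isPath _)
  have : v ∈ ((pat ht r y).append (pat ht y x)).support := by
    apply Walk.support_bypass_subset
    rw [hb]
    exact hx
  rw [Walk.mem_support_append_iff] at this
  rcases this with h | h
  · exact absurd h hy
  · exact mem_pat_symm ht h

lemma cover_exists (ht : G.IsTree) (hcard : 2 ≤ Fintype.card V) :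
    ∃ P : Fin (((Finset.univ.filter fun v : V => G.degree v = 1).card + 1) / 2) →
      Σ u : V, Σ v : V, G.Walk u v,
      IsPathCover G P ∧ ∀ i, IsIsometricWalk G (P i).2.2 := by
  classical
  set leaves : Finset V := Finset.univ.filter (fun v : V => G.degree v = 1) with hleaves
  have hne : Nonempty V := Fintype.card_pos_iff.mp (by omega)
  obtain ⟨r, hrdeg, -⟩ := exists_leaf_below ht hcard (Classical.arbitrary V) (Classical.arbitrary V)
  have hrleaf : r ∈ leaves := by simp [hleaves, hrdeg]
  -- the key and the order
  letI lord : LinearOrder V := LinearOrder.lift' (Fintype.equivFin V) (Fintype.equivFin V).injective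
  set key : V → List V := fun z => (pat ht r z).support with hkey
  have key_inj : Function.Injective key := by
    intro z1 z2 h
    have h1 : ∀ z : V, (key z).reverse = z :: (pat ht r z).reverse.support.tail := by
      intro z
      rw [hkey]
      rw [← Walk.support_reverse]
      exact Walk.support_eq_cons _
    have := h1 z1
    rw [h, h1 z2] at this
    exact (List.cons.injEq _ _ _ _ ▸ this).1.symm
  set rel : V → V → Prop := fun a b => key a ≤ key b with hrel
  haveI hdecrel : DecidableRel rel := fun a b => inferInstanceAs (Decidable (key a ≤ key b))
  haveI : IsTrans V rel := ⟨fun a b c hab hbc => le_trans hab hbc⟩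
  haveI : IsAntisymm V rel := ⟨fun a b hab hba => key_inj (le_antisymm hab hba)⟩
  haveI : IsTotal V rel := ⟨fun a b => le_total (key a) (key b)⟩
  haveI : IsRefl V rel := ⟨fun a => le_refl (key a)⟩
  set L : List V := Finset.sort leaves rel with hL
  set ℓ : ℕ := leaves.card with hl
  have hlen : L.length = ℓ := Finset.length_sort (s := leaves) rel
  have hl2 : 2 ≤ ℓ := by
    obtain ⟨v0, hv0⟩ := Fintype.exists_ne_of_one_lt_card (by omega) r
    obtain ⟨z, hzdeg, hzmem⟩ := exists_leaf_below ht hcard r v0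
    have hzr : z ≠ r := by
      intro h
      rw [h, pat_self_support] at hzmem
      simp at hzmem
      exact hv0 hzmem
    have : 1 < leaves.card := Finset.one_lt_card.mpr
      ⟨z, by simp [hleaves, hzdeg], r, hrleaf, hzr⟩
    omega
  set m : ℕ := (ℓ + 1) / 2 with hm
  have hmℓ : m < ℓ := by omega
  have getmem : ∀ j, j < ℓ → L.getD j r ∈ leaves := by
    intro j hj
    have : L.getD j r = L.get ⟨j, by omega⟩ := by
      rw [List.getD_eq_getElem L r (by omega)]; rfl
    rw [this]
    rw [← Finset.mem_sort rel (s := leaves), ← hL]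
    exact List.get_mem _ _
  -- membership / index facts
  have hsorted : ∀ j1 j2 : ℕ, (h1 : j1 < ℓ) → (h2 : j2 < ℓ) → j1 ≤ j2 →
      key (L.getD j1 r) ≤ key (L.getD j2 r) := by
    intro j1 j2 h1 h2 h12
    rw [List.getD_eq_getElem L r (by omega), List.getD_eq_getElem L r (by omega)]
    have hs : L.Pairwise rel := Finset.pairwise_sort leaves rel
    have := hs.rel_get_of_le (a := ⟨j1, by omega⟩) (b := ⟨j2, by omega⟩) (by exact h12)
    exact this
  -- the cover
  refine ⟨fun j => ⟨L.getD (j : ℕ) r, L.getD (((j : ℕ) + m) % ℓ) r, pat ht _ _⟩, ⟨?_, ?_⟩, ?_⟩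
  · intro i
    exact pat_isPath ht _ _
  · -- coverage
    intro v
    by_cases hvr : v = r
    · -- r is an endpoint of some path
      have hvL : v ∈ L := by rw [hL, Finset.mem_sort, hvr]; exact hrleaf
      obtain ⟨⟨jr, hjr⟩, hjrv⟩ := List.mem_iff_get.mp hvL
      have hjrℓ : jr < ℓ := by omega
      have hget : L.getD jr r = v := by
        rw [List.getD_eq_getElem L r (by omega)]; exact hjrv
      by_cases hjrm : jr < m
      · refine ⟨⟨jr, by omega⟩, ?_⟩
        show v ∈ (pat ht (L.getD jr r) (L.getD ((jr + m) % ℓ) r)).support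
        rw [hget]
        exact Walk.start_mem_support _
      · refine ⟨⟨jr - m, by omega⟩, ?_⟩
        show v ∈ (pat ht (L.getD (jr - m) r) (L.getD (((jr - m) + m) % ℓ) r)).support
        have heq : ((jr - m : ℕ) + m) % ℓ = jr := by
          rw [Nat.sub_add_cancel (by omega), Nat.mod_eq_of_lt (by omega)]
        rw [heq, hget]
        exact Walk.end_mem_support _
    · -- v ≠ r
      set Ifin : Finset ℕ := (Finset.range ℓ).filter
        (fun j => v ∈ (pat ht r (L.getD j r)).support) with hIfin
      have hIne : Ifin.Nonempty := by
        obtain ⟨z, hzdeg, hzmem⟩ := exists_leaf_below ht hcard r v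
        have hzL : z ∈ L := by rw [hL, Finset.mem_sort]; simp [hleaves, hzdeg]
        obtain ⟨⟨jz, hjz⟩, hjzv⟩ := List.mem_iff_get.mp hzL
        refine ⟨jz, ?_⟩
        simp only [hIfin, Finset.mem_filter, Finset.mem_range]
        constructor
        · omega
        · have : L.getD jz r = z := by
            rw [List.getD_eq_getElem L r (by omega)]; exact hjzv
          rw [this]
          exact hzmem
      set i1 : ℕ := Ifin.min' hIne with hi1
      set i2 : ℕ := Ifin.max' hIne with hi2
      have hi1m : i1 ∈ Ifin := Ifin.min'_mem hIne
      have hi2m : i2 ∈ Ifin := Ifin.max'_mem hIne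
      have h12 : i1 ≤ i2 := Finset.min'_le _ _ hi2m
      have hi2ℓ : i2 < ℓ := by
        have := hi2m
        simp only [hIfin, Finset.mem_filter, Finset.mem_range] at this
        exact this.1
      have hmemIff : ∀ j, j < ℓ → (j ∈ Ifin ↔ v ∈ (pat ht r (L.getD j r)).support) := by
        intro j hj
        simp [hIfin, Finset.mem_filter, Finset.mem_range, hj]
      have hconvex : ∀ j, i1 ≤ j → j ≤ i2 → j ∈ Ifin := by
        intro j hj1 hj2
        have hjℓ : j < ℓ := by omega
        have hp1 : (pat ht r v).support <+: key (L.getD i1 r) :=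
          (mem_support_iff_prefix ht r v _).mp ((hmemIff i1 (by omega)).mp hi1m)
        have hp2 : (pat ht r v).support <+: key (L.getD i2 r) :=
          (mem_support_iff_prefix ht r v _).mp ((hmemIff i2 (by omega)).mp hi2m)
        have hle1 : key (L.getD i1 r) ≤ key (L.getD j r) := hsorted i1 j (by omega) hjℓ hj1
        have hle2 : key (L.getD j r) ≤ key (L.getD i2 r) := hsorted j i2 hjℓ (by omega) hj2
        have := lex3 (pat ht r v).support (key (L.getD i1 r)) (key (L.getD i2 r))
          (key (L.getD j r)) hp1 hp2 (not_lt.mpr hle1) (not_lt.mpr hle2)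
        rw [hmemIff j hjℓ]
        exact (mem_support_iff_prefix ht r v _).mpr this
      -- r's index is not in Ifin
      have hrL : r ∈ L := by rw [hL, Finset.mem_sort]; exact hrleaf
      obtain ⟨⟨jr, hjr⟩, hjrv⟩ := List.mem_iff_get.mp hrL
      have hjrℓ : jr < ℓ := by omega
      have hjrnot : jr ∉ Ifin := by
        rw [hmemIff jr hjrℓ]
        have : L.getD jr r = r := by
          rw [List.getD_eq_getElem L r (by omega)]; exact hjrv
        rw [this, pat_self_support]
        simp
        exact hvr
      have hnotall : ¬ (i1 = 0 ∧ i2 = ℓ - 1) := by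
        rintro ⟨h1, h2⟩
        exact hjrnot (hconvex jr (by omega) (by omega))
      obtain ⟨j, hjm, hiff⟩ := straddle ℓ m i1 i2 hl2 hm h12 hi2ℓ hnotall
      have hjℓ : j < ℓ := by omega
      have hj'ℓ : (j + m) % ℓ < ℓ := Nat.mod_lt _ (by omega)
      have hIj : j ∈ Ifin ↔ (i1 ≤ j ∧ j ≤ i2) := by
        constructor
        · intro h; exact ⟨Finset.min'_le _ _ h, Finset.le_max' _ _ h⟩
        · intro h; exact hconvex j h.1 h.2
      have hIj' : (j + m) % ℓ ∈ Ifin ↔ (i1 ≤ (j + m) % ℓ ∧ (j + m) % ℓ ≤ i2) := by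
        constructor
        · intro h; exact ⟨Finset.min'_le _ _ h, Finset.le_max' _ _ h⟩
        · intro h; exact hconvex _ h.1 h.2
      refine ⟨⟨j, hjm⟩, ?_⟩
      show v ∈ (pat ht (L.getD j r) (L.getD ((j + m) % ℓ) r)).support
      by_cases hj : j ∈ Ifin
      · have hj'not : (j + m) % ℓ ∉ Ifin := by
          rw [hIj']
          exact (hiff.mp (hIj.mp hj))
        exact crossing ht ((hmemIff j hjℓ).mp hj)
          (fun hc => hj'not ((hmemIff _ hj'ℓ).mpr hc))
      · have hj' : (j + m) % ℓ ∈ Ifin := by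
          rw [hIj']
          by_contra hc
          rw [← hIj'] at hc
          exact hj (hIj.mpr (hiff.mpr (by rw [hIj'] at hc; exact hc)))
        apply mem_pat_symm ht
        exact crossing ht ((hmemIff _ hj'ℓ).mp hj')
          (fun hc => hj ((hmemIff j hjℓ).mpr hc))
  · intro i
    exact ⟨pat_isPath ht _ _, pat_length ht _ _⟩

end TC

theorem stmt_9 {V : Type*} [Fintype V] [DecidableEq V] (G : SimpleGraph V)
    [DecidableRel G.Adj] (htree : G.IsTree) (hcard : 2 ≤ Fintype.card V)
    (ℓ : ℕ) (hℓ : ℓ = (Finset.univ.filter fun v : V => G.degree v = 1).card) :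
    isometricPathCoverNum G = (ℓ + 1) / 2 := by
  subst hℓ
  unfold isometricPathCoverNum
  apply le_antisymm
  · exact Nat.sInf_le (TC.cover_exists htree hcard)
  · apply le_csInf ⟨((Finset.univ.filter fun v : V => G.degree v = 1).card + 1) / 2,
      TC.cover_exists htree hcard⟩
    intro n hn
    have hn' : ∃ P : Fin n → Σ u : V, Σ v : V, G.Walk u v,
        IsPathCover G P ∧ ∀ i, IsIsometricWalk G (P i).2.2 := hn
    obtain ⟨P, ⟨hpaths, hcov⟩, -⟩ := hn'
    set E : Finset V := Finset.univ.biUnion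
      (fun i : Fin n => ({(P i).1, (P i).2.1} : Finset V)) with hE
    have hsub : (Finset.univ.filter fun v : V => G.degree v = 1) ⊆ E := by
      intro x hx
      have hdeg : G.degree x = 1 := by simpa using hx
      obtain ⟨i, hi⟩ := hcov x
      rcases TC.leaf_endpoint hdeg (P i).2.2 (hpaths i) hi with h | h
      · exact Finset.mem_biUnion.mpr ⟨i, Finset.mem_univ i, by simp [h]⟩
      · exact Finset.mem_biUnion.mpr ⟨i, Finset.mem_univ i, by simp [h]⟩
    have hcardE : E.card ≤ 2 * n := by
      calc E.card ≤ ∑ i : Fin n, ({(P i).1, (P i).2.1} : Finset V).card :=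
            Finset.card_biUnion_le
        _ ≤ ∑ _i : Fin n, 2 := Finset.sum_le_sum
            (fun i _ => le_trans (Finset.card_insert_le _ _) (by simp))
        _ = 2 * n := by simp [Finset.sum_const, Finset.card_univ, mul_comm]
    have := Finset.card_le_card hsub
    omega
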